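/- Let μ = μ_{R,B} be the self-affine measure for R = [[2,1],[0,2]] and B = {(0,0),(1,0)}, and let Λ ⊆ ℝ² with 0 ∈ Λ. Then Λ is an orthogonal set of μ if and only if there exist a subset A ⊆ ℤ with 0 ∈ A and a function β : A → ℝ with β(0) = 0 such that Λ = {(n, β(n)) : n ∈ A}; equivalently, if and only if every point of Λ has integer first coordinate and distinct points of Λ have distinct first coordinates. -/

import Mathlib

open MeasureTheory Filter Set Metric
open scoped ENNReal

noncomputable section

/-- The plane with the Euclidean metric. -/
abbrev Plane : Type := EuclideanSpace ℝ (Fin 2)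

/-- The point `(a, b)` of the Euclidean plane. -/
def pt (a b : ℝ) : Plane := WithLp.toLp 2 ![a, b]

/-- The self-affine measure `μ_{R,B}` for `R = [[2,1],[0,2]]`, `B = {(0,0),(1,0)}`:
the pushforward of Lebesgue measure on `[0,1]` under `x ↦ (x, 0)`. -/
def muRB : Measure Plane :=
  Measure.map (fun x : ℝ => pt x 0) (volume.restrict (Set.Icc (0:ℝ) 1))

instance : IsProbabilityMeasure (volume.restrict (Set.Icc (0:ℝ) 1)) :=
  ⟨by simp [Real.volume_Icc]⟩

lemma measurable_pt0 : Measurable (fun x : ℝ => pt x 0) := by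
  unfold pt
  apply Continuous.measurable
  exact (PiLp.continuous_toLp 2 _).comp
    (continuous_pi fun i => by fin_cases i <;> simp <;> fun_prop)

instance : IsProbabilityMeasure muRB :=
  Measure.isProbabilityMeasure_map measurable_pt0.aemeasurable

/-- The Fourier transform `μ̂(ξ) = ∫ e^{-2πi⟨ξ,x⟩} dμ(x)` of a measure on the plane. -/
def fourierTransform (μ : Measure Plane) (ξ : Plane) : ℂ :=
  ∫ x, Complex.exp ((-(2 * Real.pi * (inner ℝ ξ x : ℝ)) : ℝ) * Complex.I) ∂μ

/-- The exponential function `e_λ(x) = e^{-2πi⟨λ,x⟩}`. -/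
def expFn (lam : Plane) : Plane → ℂ :=
  fun x => Complex.exp ((-(2 * Real.pi * (inner ℝ lam x : ℝ)) : ℝ) * Complex.I)

lemma expFn_memLp (μ : Measure Plane) [IsFiniteMeasure μ] (lam : Plane) :
    MemLp (expFn lam) 2 μ := by
  refine MemLp.of_bound ?_ 1 ?_
  · apply Continuous.aestronglyMeasurable
    unfold expFn
    have h1 : Continuous fun x : Plane => (inner ℝ lam x : ℝ) :=
      continuous_const.inner continuous_id
    exact Complex.continuous_exp.comp
      ((Complex.continuous_ofReal.comp ((continuous_const.mul h1).neg)).mul continuous_const)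
  · refine Eventually.of_forall fun x => ?_
    unfold expFn
    rw [Complex.norm_exp_ofReal_mul_I]

/-- The exponential `e_λ` as an element of `L²(μ)`. -/
def expLp (μ : Measure Plane) [IsFiniteMeasure μ] (lam : Plane) : Lp ℂ 2 μ :=
  (expFn_memLp μ lam).toLp _

/-- `Λ` is an orthogonal set of `μ`: the exponentials `{e_λ : λ ∈ Λ}` form an
orthonormal family in `L²(μ)`. -/
def IsOrthogonalSet (μ : Measure Plane) [IsFiniteMeasure μ] (Λ : Set Plane) : Prop :=
  Orthonormal ℂ (fun lam : Λ => expLp μ lam)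

/-- `Λ` is a spectrum of `μ`: the exponentials `{e_λ : λ ∈ Λ}` form an
orthonormal basis of `L²(μ)`. -/
def IsSpectrum (μ : Measure Plane) [IsFiniteMeasure μ] (Λ : Set Plane) : Prop :=
  Orthonormal ℂ (fun lam : Λ => expLp μ lam) ∧
    (Submodule.span ℂ (Set.range (fun lam : Λ => expLp μ lam))).topologicalClosure = ⊤

/-- The upper `r`-Beurling density
`D_r^+(Λ) = limsup_{h→∞} sup_{x} #(Λ ∩ B(x,h)) / h^r`. -/
def beurlingDensity (r : ℝ) (Λ : Set Plane) : ℝ≥0∞ :=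
  limsup (fun h : ℝ =>
    ⨆ x : Plane, ((Λ ∩ Metric.ball x h).encard : ℝ≥0∞) / ENNReal.ofReal (h ^ r)) atTop

/-- The upper `r`-density (centered at the origin)
`B_r^+(Λ) = limsup_{h→∞} #(Λ ∩ B(0,h)) / h^r`. -/
def upperDensity (r : ℝ) (Λ : Set Plane) : ℝ≥0∞ :=
  limsup (fun h : ℝ =>
    ((Λ ∩ Metric.ball (0 : Plane) h).encard : ℝ≥0∞) / ENNReal.ofReal (h ^ r)) atTop

/-- The Beurling dimension `dim_Be(Λ) = sup {r > 0 : D_r^+(Λ) = ∞}`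
(equal to `0` when the set is empty, by the convention `sSup ∅ = 0` in `ℝ`). -/
def beurlingDim (Λ : Set Plane) : ℝ :=
  sSup {r : ℝ | 0 < r ∧ beurlingDensity r Λ = ⊤}

/-- The Banach dimension `dim_Ba(Λ) = sup {r > 0 : B_r^+(Λ) = ∞}`. -/
def banachDim (Λ : Set Plane) : ℝ :=
  sSup {r : ℝ | 0 < r ∧ upperDensity r Λ = ⊤}

/-- The sign of an integer, as a real number. -/
def isgn (n : ℤ) : ℝ := (Int.sign n : ℝ)

end


-- ### Auxiliary lemmas

lemma pt_apply_zero (a b : ℝ) : pt a b 0 = a := rfl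
lemma pt_apply_one (a b : ℝ) : pt a b 1 = b := rfl

lemma pt_eta (p : Plane) : pt (p 0) (p 1) = p := by
  ext i; fin_cases i <;> rfl

lemma zero_apply_plane (i : Fin 2) : (0 : Plane) i = 0 := rfl

lemma J_zero_iff (a : ℝ) (ha : a ≠ 0) :
    (∫ x in (0:ℝ)..1, Complex.exp (((-(2*Real.pi*a) : ℝ) : ℂ) * Complex.I * x)) = 0 ↔
      ∃ n : ℤ, a = n := by
  have hr : (-(2*Real.pi*a) : ℝ) ≠ 0 := by
    simp [Real.pi_ne_zero, ha]
  have hc : ((-(2*Real.pi*a) : ℝ) : ℂ) * Complex.I ≠ 0 :=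
    mul_ne_zero (Complex.ofReal_ne_zero.mpr hr) Complex.I_ne_zero
  rw [integral_exp_mul_complex hc, div_eq_zero_iff]
  simp only [hc, or_false, Complex.ofReal_one, Complex.ofReal_zero, mul_one, mul_zero,
    Complex.exp_zero, sub_eq_zero, Complex.exp_eq_one_iff]
  constructor
  · rintro ⟨n, hn⟩
    refine ⟨-n, ?_⟩
    have h2 : ((-(2*Real.pi*a) : ℝ) : ℂ) * Complex.I = (((2*Real.pi*(n:ℝ)) : ℝ) : ℂ) * Complex.I := by
      rw [hn]; push_cast; ring
    have h3 := mul_right_cancel₀ Complex.I_ne_zero h2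
    have h4 : -(2*Real.pi*a) = 2*Real.pi*(n:ℝ) := by exact_mod_cast h3
    have hπ : (2*Real.pi) ≠ 0 := by positivity
    have h5 := mul_left_cancel₀ hπ (show 2*Real.pi*a = 2*Real.pi*(((-n : ℤ):ℝ)) by push_cast; linarith)
    exact h5
  · rintro ⟨n, hn⟩
    exact ⟨-n, by subst hn; push_cast; ring⟩

lemma inner_pt (v : Plane) (x : ℝ) : (inner ℝ v (pt x 0) : ℝ) = v 0 * x := by
  rw [PiLp.inner_apply, Fin.sum_univ_two]
  simp [pt, RCLike.inner_apply, mul_comm]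

lemma expFn_continuous (lam : Plane) : Continuous (expFn lam) := by
  unfold expFn
  have h1 : Continuous fun x : Plane => (inner ℝ lam x : ℝ) :=
    continuous_const.inner continuous_id
  exact Complex.continuous_exp.comp
    ((Complex.continuous_ofReal.comp ((continuous_const.mul h1).neg)).mul continuous_const)

lemma inner_expLp (lam lam' : Plane) :
    (inner ℂ (expLp muRB lam) (expLp muRB lam') : ℂ)
      = ∫ x in (0:ℝ)..1,
          Complex.exp (((-(2*Real.pi*(lam' 0 - lam 0)) : ℝ) : ℂ) * Complex.I * x) := by
  rw [MeasureTheory.L2.inner_def]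
  have hf : ((expLp muRB lam : Lp ℂ 2 muRB) : Plane → ℂ) =ᵐ[muRB] expFn lam :=
    MemLp.coeFn_toLp _
  have hg : ((expLp muRB lam' : Lp ℂ 2 muRB) : Plane → ℂ) =ᵐ[muRB] expFn lam' :=
    MemLp.coeFn_toLp _
  have step1 : (∫ x, (inner ℂ ((expLp muRB lam : Lp ℂ 2 muRB) x)
        ((expLp muRB lam' : Lp ℂ 2 muRB) x) : ℂ) ∂muRB)
      = ∫ x, (starRingEnd ℂ) (expFn lam x) * expFn lam' x ∂muRB := by
    refine integral_congr_ae ?_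
    filter_upwards [hf, hg] with x h1 h2
    rw [RCLike.inner_apply, h1, h2, mul_comm]
  rw [step1]
  have hpt : ∀ x : Plane, (starRingEnd ℂ) (expFn lam x) * expFn lam' x
      = Complex.exp (((-(2*Real.pi*((inner ℝ lam' x : ℝ) - (inner ℝ lam x : ℝ)))
          : ℝ) : ℂ) * Complex.I) := by
    intro x
    unfold expFn
    rw [← Complex.exp_conj, ← Complex.exp_add]
    congr 1
    rw [map_mul, Complex.conj_I, Complex.conj_ofReal]
    push_cast
    ring
  simp only [hpt]
  unfold muRB
  rw [integral_map measurable_pt0.aemeasurable]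
  · rw [MeasureTheory.integral_Icc_eq_integral_Ioc,
      ← intervalIntegral.integral_of_le (by norm_num : (0:ℝ) ≤ 1)]
    refine intervalIntegral.integral_congr fun x _ => ?_
    rw [inner_pt, inner_pt]
    congr 1
    push_cast
    ring
  · refine Continuous.aestronglyMeasurable ?_
    have h1 : Continuous fun x : Plane => (inner ℝ lam' x : ℝ) - (inner ℝ lam x : ℝ) :=
      (continuous_const.inner continuous_id).sub (continuous_const.inner continuous_id)
    exact Complex.continuous_exp.comp
      ((Complex.continuous_ofReal.comp ((continuous_const.mul h1).neg)).mul continuous_const)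

lemma isOrthogonalSet_muRB_iff_cond (Λ : Set Plane) :
    IsOrthogonalSet muRB Λ ↔
      ∀ p ∈ Λ, ∀ q ∈ Λ, p ≠ q → (p 0 ≠ q 0 ∧ ∃ n : ℤ, q 0 - p 0 = n) := by
  classical
  unfold IsOrthogonalSet
  rw [orthonormal_iff_ite]
  constructor
  · intro h p hp q hq hpq
    have h2 := h ⟨p, hp⟩ ⟨q, hq⟩
    rw [if_neg (by simpa [Subtype.ext_iff] using hpq), inner_expLp] at h2
    have ha : q 0 - p 0 ≠ 0 := by
      intro h0
      rw [h0] at h2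
      norm_num at h2
    exact ⟨fun h' => ha (by rw [h']; ring), (J_zero_iff _ ha).mp h2⟩
  · intro h i j
    rw [inner_expLp]
    by_cases hij : i = j
    · rw [if_pos hij, hij]
      norm_num
    · rw [if_neg hij]
      obtain ⟨hne, n, hn⟩ := h i i.2 j j.2 (fun e => hij (Subtype.ext e))
      exact (J_zero_iff _ (sub_ne_zero.mpr (fun e => hne e.symm))).mpr ⟨n, hn⟩

/-- A set `Λ ∋ 0` is an orthogonal set of `μ_{R,B}` iff it is of the form
`{(n, β(n)) : n ∈ A}` for some `A ⊆ ℤ` with `0 ∈ A` and `β : ℤ → ℝ` with `β 0 = 0`;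
equivalently, iff every point of `Λ` has integer first coordinate and distinct points of
`Λ` have distinct first coordinates. -/
theorem isOrthogonalSet_muRB_iff (Λ : Set Plane) (h0 : (0 : Plane) ∈ Λ) :
    (IsOrthogonalSet muRB Λ ↔
      ∃ (A : Set ℤ) (β : ℤ → ℝ), 0 ∈ A ∧ β 0 = 0 ∧
        Λ = (fun n : ℤ => pt (n : ℝ) (β n)) '' A) ∧
    (IsOrthogonalSet muRB Λ ↔
      (∀ p ∈ Λ, ∃ n : ℤ, p 0 = (n : ℝ)) ∧
        ∀ p ∈ Λ, ∀ q ∈ Λ, p 0 = q 0 → p = q) := by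
  classical
  have hsecond : IsOrthogonalSet muRB Λ ↔
      ((∀ p ∈ Λ, ∃ n : ℤ, p 0 = (n : ℝ)) ∧
        ∀ p ∈ Λ, ∀ q ∈ Λ, p 0 = q 0 → p = q) := by
    rw [isOrthogonalSet_muRB_iff_cond]
    constructor
    · intro h
      constructor
      · intro p hp
        by_cases hp0 : p = 0
        · exact ⟨0, by simp [hp0, zero_apply_plane]⟩
        · obtain ⟨-, n, hn⟩ := h 0 h0 p hp (fun e => hp0 e.symm)
          exact ⟨n, by rw [← hn, zero_apply_plane]; ring⟩
      · intro p hp q hq he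
        by_contra hpq
        exact (h p hp q hq hpq).1 he
    · rintro ⟨hint, hinj⟩ p hp q hq hpq
      obtain ⟨n, hn⟩ := hint p hp
      obtain ⟨m, hm⟩ := hint q hq
      refine ⟨fun e => hpq (hinj p hp q hq e), ⟨m - n, ?_⟩⟩
      rw [hn, hm]; push_cast; ring
  have hfirst : ((∀ p ∈ Λ, ∃ n : ℤ, p 0 = (n : ℝ)) ∧
        ∀ p ∈ Λ, ∀ q ∈ Λ, p 0 = q 0 → p = q) ↔
      (∃ (A : Set ℤ) (β : ℤ → ℝ), 0 ∈ A ∧ β 0 = 0 ∧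
        Λ = (fun n : ℤ => pt (n : ℝ) (β n)) '' A) := by
    constructor
    · rintro ⟨hint, hinj⟩
      set A : Set ℤ := {n : ℤ | ∃ p ∈ Λ, p 0 = (n : ℝ)} with hA
      set β : ℤ → ℝ := fun n =>
        if h : ∃ p ∈ Λ, p 0 = (n : ℝ) then h.choose 1 else 0 with hβ
      have h0A : (0 : ℤ) ∈ A := ⟨0, h0, by rw [zero_apply_plane]; norm_num⟩
      have hchoose : ∀ (n : ℤ) (h : ∃ p ∈ Λ, p 0 = (n : ℝ)),
          h.choose ∈ Λ ∧ h.choose 0 = (n : ℝ) := fun n h => h.choose_spec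
      refine ⟨A, β, h0A, ?_, ?_⟩
      · have hex : ∃ p ∈ Λ, p 0 = ((0:ℤ) : ℝ) :=
          ⟨0, h0, by rw [zero_apply_plane]; norm_num⟩
        have hβ0 : β 0 = hex.choose 1 := dif_pos hex
        rw [hβ0]
        have h1 := (hchoose 0 hex).1
        have h2 := (hchoose 0 hex).2
        have h3 : hex.choose = 0 :=
          hinj _ h1 0 h0 (by rw [h2, zero_apply_plane]; norm_num)
        rw [h3, zero_apply_plane]
      · ext p
        constructor
        · intro hp
          obtain ⟨n, hn⟩ := hint p hp
          have hex : ∃ q ∈ Λ, q 0 = (n : ℝ) := ⟨p, hp, hn⟩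
          refine ⟨n, ⟨p, hp, hn⟩, ?_⟩
          simp only [hβ]
          rw [dif_pos hex]
          have h3 : hex.choose = p :=
            hinj _ (hchoose n hex).1 p hp (by rw [(hchoose n hex).2, hn])
          rw [h3, ← hn, pt_eta]
        · rintro ⟨n, hnA, rfl⟩
          obtain ⟨q, hq, hqn⟩ := hnA
          have hex : ∃ q ∈ Λ, q 0 = (n : ℝ) := ⟨q, hq, hqn⟩
          simp only [hβ]
          rw [dif_pos hex]
          have h3 : hex.choose = q :=
            hinj _ (hchoose n hex).1 q hq (by rw [(hchoose n hex).2, hqn])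
          rw [h3, ← hqn, pt_eta]
          exact hq
    · rintro ⟨A, β, hA0, hb0, rfl⟩
      constructor
      · rintro p ⟨n, hn, rfl⟩
        exact ⟨n, rfl⟩
      · rintro p ⟨n, hn, rfl⟩ q ⟨m, hm, rfl⟩ he
        have : (n : ℝ) = (m : ℝ) := he
        have hnm : n = m := by exact_mod_cast this
        rw [hnm]
  exact ⟨hsecond.trans hfirst, hsecond⟩
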